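/- Define the Lobachevsky function Λ(x) = -∫₀ˣ ln|2 sin t| dt for x ∈ ℝ. For each integer k ≥ 2, let z(k) = 1 - (1/2)·exp(-iπ/k)·(1 + (1 - 4·exp(iπ/k))^(1/2)), and let α₁(k) = arg z(k), α₂(k) = arg((z(k) - 1)/z(k)), α₃(k) = arg(1/(1 - z(k))). Then the volume V(k) = Λ(α₁(k)) + Λ(α₂(k)) + Λ(α₃(k)) tends to 3·Λ(π/3) as k → ∞. -/

import Mathlib

open Complex Real Filter

/-- The Lobachevsky function `Λ(x) = -∫₀ˣ ln|2 sin t| dt`. -/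
noncomputable def lobachevsky (x : ℝ) : ℝ :=
  -∫ t in (0 : ℝ)..x, Real.log |2 * Real.sin t|

section Aux
open MeasureTheory Set intervalIntegral


lemma integrableOn_log01 : IntegrableOn Real.log (Set.Ioc (0:ℝ) 1) volume := by
  have h := integrableOn_deriv_of_nonneg (g := fun t : ℝ => t - t * Real.log t)
    (g' := fun t : ℝ => -Real.log t) (a := (0:ℝ)) (b := 1)
    ((continuous_id.sub Real.continuous_mul_log).continuousOn)
    (fun x hx => by
      have := (Real.hasDerivAt_mul_log (ne_of_gt hx.1))
      exact ((hasDerivAt_id x).sub this).congr_deriv (by ring))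
    (fun x hx => by
      show 0 ≤ -Real.log x
      have : Real.log x ≤ 0 := Real.log_nonpos hx.1.le hx.2.le
      linarith)
  exact h.neg.congr (Filter.Eventually.of_forall fun x => by simp)

lemma intInt_logsin : IntervalIntegrable (fun t => Real.log |2 * Real.sin t|) volume 0 (π/2) := by
  have h1 : IntervalIntegrable (fun t => Real.log |2 * Real.sin t|) volume 0 1 := by
    rw [intervalIntegrable_iff_integrableOn_Ioc_of_le (by norm_num)]
    have hg : IntegrableOn
        (fun t : ℝ => Real.log 2 + Real.log t + Real.log (Real.sin t / t))
        (Set.Ioc (0:ℝ) 1) volume := by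
      refine (((integrable_const _).add integrableOn_log01).add ?_)
      refine Measure.integrableOn_of_bounded (M := Real.log (π/2)) (by simp) ?_ ?_
      · exact ((Real.measurable_sin.div measurable_id).log).aestronglyMeasurable
      · filter_upwards [ae_restrict_mem measurableSet_Ioc] with t ht
        have ht0 : 0 < t := ht.1
        have htle : t ≤ π/2 := le_trans ht.2 (by nlinarith [Real.pi_gt_three])
        have hsle : Real.sin t ≤ t := Real.sin_le ht0.le
        have hsge : 2/π * t ≤ Real.sin t := Real.mul_le_sin ht0.le htle
        have hπ : (0:ℝ) < π := Real.pi_pos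
        have hq0 : 0 < Real.sin t / t := by
          apply div_pos _ ht0
          calc (0:ℝ) < 2/π * t := by positivity
          _ ≤ _ := hsge
        have hq1 : Real.sin t / t ≤ 1 := (div_le_one ht0).2 hsle
        have hq2 : 2/π ≤ Real.sin t / t := (le_div_iff₀ ht0).2 (by linarith [hsge])
        rw [Real.norm_eq_abs, abs_le]
        constructor
        · have : Real.log (2/π) ≤ Real.log (Real.sin t / t) :=
            Real.log_le_log (by positivity) hq2
          have h2 : Real.log (2/π) = - Real.log (π/2) := by
            rw [← Real.log_inv]; norm_num
          linarith
        · have h3 : Real.log (Real.sin t / t) ≤ 0 := Real.log_nonpos hq0.le hq1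
          have h4 : 0 ≤ Real.log (π/2) := Real.log_nonneg (by linarith [Real.pi_gt_three])
          linarith
    refine (hg.congr_fun ?_ measurableSet_Ioc)
    intro t ht
    have ht0 : 0 < t := ht.1
    have hts : 0 < Real.sin t := Real.sin_pos_of_pos_of_lt_pi ht0
      (lt_of_le_of_lt ht.2 (by linarith [Real.pi_gt_three]))
    simp only
    rw [abs_of_pos (by positivity), Real.log_mul (by norm_num) hts.ne',
      Real.log_div hts.ne' ht0.ne']
    ring
  have h2 : IntervalIntegrable (fun t => Real.log |2 * Real.sin t|) volume 1 (π/2) := by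
    apply ContinuousOn.intervalIntegrable
    apply ContinuousOn.log
    · exact ((continuous_const.mul Real.continuous_sin).abs).continuousOn
    · intro t ht
      rw [Set.uIcc_of_le (by nlinarith [Real.pi_gt_three])] at ht
      have : 0 < Real.sin t := Real.sin_pos_of_pos_of_lt_pi (by linarith [ht.1])
        (lt_of_le_of_lt ht.2 (by linarith [Real.pi_gt_three]))
      simp [abs_ne_zero]
      positivity
  exact h1.trans h2

lemma lob_contAt : ContinuousAt lobachevsky (π/3) := by
  have hπ := Real.pi_gt_three
  have h : ContinuousWithinAt (fun b => ∫ t in (0:ℝ)..b, Real.log |2 * Real.sin t|)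
      (Set.Icc (π/4) (π/2)) (π/3) := by
    apply intervalIntegral.continuousWithinAt_primitive (measure_singleton _)
    rw [min_eq_left (by positivity), max_eq_right (by positivity)]
    exact intInt_logsin
  have h2 := h.continuousAt (Icc_mem_nhds (by linarith) (by linarith))
  exact h2.neg


noncomputable def LL : ℂ := (1/2 : ℝ) + (Real.sqrt 3 / 2 : ℝ) * Complex.I

lemma z_tendsto (z : ℕ → ℂ)
    (hz : ∀ k : ℕ, 2 ≤ k →
      z k = 1 - (1 / 2) * Complex.exp (-(Real.pi * Complex.I) / (k : ℂ)) *
        (1 + (1 - 4 * Complex.exp (Real.pi * Complex.I / (k : ℂ))) ^ ((1 : ℂ) / 2))) :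
    Tendsto z atTop (nhds LL) := by
  -- θ k = π / k → 0
  have hθ : Tendsto (fun k : ℕ => π / k) atTop (nhds 0) :=
    tendsto_const_div_atTop_nhds_zero_nat π
  -- w k := 1 - 4 exp(θ k * I)
  set w : ℕ → ℂ := fun k => 1 - 4 * Complex.exp (((π / k : ℝ) : ℂ) * Complex.I) with hw
  have hwt : Tendsto w atTop (nhds (-3)) := by
    have : Tendsto (fun k : ℕ => ((π / k : ℝ) : ℂ) * Complex.I) atTop (nhds 0) := by
      have := (Complex.continuous_ofReal.tendsto 0).comp hθ
      simpa using this.mul_const Complex.I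
    have h2 := (Complex.continuous_exp.tendsto 0).comp this
    simp only [Complex.exp_zero] at h2
    have h3 := (tendsto_const_nhds (x := (1:ℂ))).sub (h2.const_mul 4)
    have e : (1:ℂ) - 4 * 1 = -3 := by norm_num
    rw [e] at h3
    exact h3
  have hwim : ∀ k : ℕ, 2 ≤ k → (w k).im < 0 := by
    intro k hk
    have hk0 : (0:ℝ) < k := by positivity
    have h1 : 0 < π / k := by positivity
    have h2 : π / k < π := by
      have h2k : (2:ℝ) ≤ k := by exact_mod_cast hk
      rw [div_lt_iff₀ hk0]
      nlinarith [Real.pi_pos, mul_le_mul_of_nonneg_left h2k Real.pi_pos.le]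
    have hsin : 0 < Real.sin (π / k) := Real.sin_pos_of_pos_of_lt_pi h1 h2
    have : (w k).im = -(4 * Real.sin (π / k)) := by
      simp [hw, Complex.exp_ofReal_mul_I_im, -Complex.ofReal_div]
    rw [this]
    simp
    positivity
  -- within lower half plane
  have hwt' : Tendsto w atTop (nhdsWithin (-3) {z : ℂ | z.im < 0}) := by
    rw [tendsto_nhdsWithin_iff]
    refine ⟨hwt, ?_⟩
    filter_upwards [eventually_ge_atTop 2] with k hk
    exact hwim k hk
  -- log w → log 3 - π I
  have hlog : Tendsto (fun k => Complex.log (w k)) atTop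
      (nhds ((Real.log 3 : ℂ) - π * Complex.I)) := by
    have h := Complex.tendsto_log_nhdsWithin_im_neg_of_re_neg_of_im_zero
      (z := (-3 : ℂ)) (by norm_num) (by norm_num)
    have h3 : ‖(-3 : ℂ)‖ = 3 := by
      simp
    rw [h3] at h
    exact h.comp hwt'
  -- sqrt: w k ^ (1/2) → -√3 I
  have hsqrt : Tendsto (fun k => (w k) ^ ((1:ℂ)/2)) atTop
      (nhds (-(Real.sqrt 3 : ℂ) * Complex.I)) := by
    have hlim : Complex.exp (((Real.log 3 : ℂ) - π * Complex.I) * (1/2))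
        = -(Real.sqrt 3 : ℂ) * Complex.I := by
      rw [sub_mul, Complex.exp_sub]
      have e1 : ((Real.log 3 : ℂ)) * (1/2) = ((Real.log 3 / 2 : ℝ) : ℂ) := by
        push_cast; ring
      have e2 : (↑π * Complex.I) * (1/2) = ((π/2 : ℝ) : ℂ) * Complex.I := by
        push_cast; ring
      have e4 : Complex.exp (((π/2 : ℝ) : ℂ) * Complex.I) = Complex.I := by
        rw [Complex.exp_mul_I, ← Complex.ofReal_cos, ← Complex.ofReal_sin,
          Real.cos_pi_div_two, Real.sin_pi_div_two]
        simp
      have e3 : Real.exp (Real.log 3 / 2) = Real.sqrt 3 := by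
        rw [Real.sqrt_eq_rpow, Real.rpow_def_of_pos (by norm_num)]
        congr 1
        ring
      rw [e1, e2, e4, ← Complex.ofReal_exp, e3, div_eq_iff Complex.I_ne_zero]
      have : Complex.I * Complex.I = -1 := Complex.I_mul_I
      linear_combination (Real.sqrt 3 : ℂ) * this
    have h := (Complex.continuous_exp.tendsto _).comp (hlog.mul_const ((1:ℂ)/2))
    rw [hlim] at h
    apply h.congr'
    filter_upwards [eventually_ge_atTop 2] with k hk
    have : w k ≠ 0 := by
      intro h0
      have := hwim k hk
      rw [h0] at this
      simp at this
    rw [Complex.cpow_def_of_ne_zero this]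
    rfl
  -- exp(-θ I) → 1
  have hexp : Tendsto (fun k : ℕ => Complex.exp (-(((π / k : ℝ) : ℂ) * Complex.I)))
      atTop (nhds 1) := by
    have : Tendsto (fun k : ℕ => -(((π / k : ℝ) : ℂ) * Complex.I)) atTop (nhds 0) := by
      have := (Complex.continuous_ofReal.tendsto 0).comp hθ
      have := (this.mul_const Complex.I).neg
      simpa using this
    have h2 := (Complex.continuous_exp.tendsto 0).comp this
    simpa [Function.comp_def] using h2
  -- assemble
  have key : Tendsto (fun k : ℕ => 1 - (1/2 : ℂ) * Complex.exp (-(((π / k : ℝ) : ℂ) * Complex.I)) *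
      (1 + (w k) ^ ((1:ℂ)/2))) atTop (nhds LL) := by
    have h := (tendsto_const_nhds (x := (1:ℂ))).sub
      (((hexp.const_mul (1/2 : ℂ))).mul ((tendsto_const_nhds (x := (1:ℂ))).add hsqrt))
    convert h using 2
    unfold LL
    push_cast
    ring
  apply key.congr'
  filter_upwards [eventually_ge_atTop 2] with k hk
  rw [hz k hk]
  have hk0 : (k:ℂ) ≠ 0 := by
    exact_mod_cast (by omega : k ≠ 0)
  have e1 : ((π / k : ℝ) : ℂ) * Complex.I = ↑π * Complex.I / (k:ℂ) := by
    push_cast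
    field_simp
  rw [hw]
  simp only
  rw [e1]
  ring_nf

end Aux

/-- Theorem 5.2 (volume claim): the volumes
`V(k) = Λ(α₁(k)) + Λ(α₂(k)) + Λ(α₃(k))` of the Gies.3 simplices (root series
(4.1)) tend to the volume `3Λ(π/3)` of the regular ideal simplex as `k → ∞`. -/
theorem gies3_volume_tendsto_gieseking (z : ℕ → ℂ)
    (hz : ∀ k : ℕ, 2 ≤ k →
      z k = 1 - (1 / 2) * Complex.exp (-(Real.pi * Complex.I) / (k : ℂ)) *
        (1 + (1 - 4 * Complex.exp (Real.pi * Complex.I / (k : ℂ))) ^ ((1 : ℂ) / 2))) :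
    Tendsto (fun k : ℕ =>
        lobachevsky (Complex.arg (z k)) +
        lobachevsky (Complex.arg ((z k - 1) / z k)) +
        lobachevsky (Complex.arg (1 / (1 - z k))))
      atTop (nhds (3 * lobachevsky (Real.pi / 3))) := by
  have T := z_tendsto z hz
    
  have hs3 : (0:ℝ) < Real.sqrt 3 := Real.sqrt_pos.mpr (by norm_num)
  have hs : ((Real.sqrt 3 : ℝ) : ℂ)^2 = 3 := by
    rw [← Complex.ofReal_pow, Real.sq_sqrt (by norm_num : (3:ℝ) ≥ 0)]
    norm_num
  have hLLim : LL.im = Real.sqrt 3 / 2 := by simp [LL]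
  have hLLre : LL.re = 1/2 := by simp [LL]
  have hLL0 : LL ≠ 0 := fun h => by rw [h] at hLLim; simp at hLLim; linarith
  have h1LL : (1:ℂ) - LL ≠ 0 := by
    intro h
    have h' : ((1:ℂ) - LL).im = 0 := by rw [h]; rfl
    rw [Complex.sub_im, Complex.one_im, hLLim] at h'
    linarith
  have hslit : LL ∈ Complex.slitPlane := by
    rw [Complex.mem_slitPlane_iff]
    left; rw [hLLre]; norm_num
  have hargLL : Complex.arg LL = π/3 := by
    have h : LL = Complex.cos ((π/3 : ℝ) : ℂ) + Complex.sin ((π/3 : ℝ) : ℂ) * Complex.I := by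
      rw [← Complex.ofReal_cos, ← Complex.ofReal_sin, Real.cos_pi_div_three,
        Real.sin_pi_div_three]
      simp [LL]
    rw [h]
    exact Complex.arg_cos_add_sin_mul_I ⟨by linarith [Real.pi_pos], by linarith [Real.pi_pos]⟩
  -- the three Möbius images
  have hm2 : (LL - 1) / LL = LL := by
    rw [div_eq_iff hLL0]
    simp only [LL]
    push_cast
    linear_combination (-((Real.sqrt 3:ℝ):ℂ)^2/4) * Complex.I_sq + (1/4 : ℂ) * hs
  have hm3 : (1:ℂ) / (1 - LL) = LL := by
    rw [div_eq_iff h1LL]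
    simp only [LL]
    push_cast
    linear_combination (((Real.sqrt 3:ℝ):ℂ)^2/4) * Complex.I_sq - (1/4 : ℂ) * hs
  have harg1 : Tendsto (fun k => Complex.arg (z k)) atTop (nhds (π/3)) := by
    have := (Complex.continuousAt_arg hslit).tendsto.comp T
    rwa [hargLL] at this
  have harg2 : Tendsto (fun k => Complex.arg ((z k - 1) / z k)) atTop (nhds (π/3)) := by
    have hc : ContinuousAt (fun w : ℂ => (w - 1) / w) LL :=
      ContinuousAt.div (by fun_prop) continuousAt_id hLL0
    have := ((Complex.continuousAt_arg hslit).tendsto.comp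
      ((hm2 ▸ hc.tendsto : Tendsto _ (nhds LL) (nhds LL)).comp T))
    rwa [hargLL] at this
  have harg3 : Tendsto (fun k => Complex.arg (1 / (1 - z k))) atTop (nhds (π/3)) := by
    have hc : ContinuousAt (fun w : ℂ => 1 / (1 - w)) LL :=
      ContinuousAt.div continuousAt_const (by fun_prop) h1LL
    have := ((Complex.continuousAt_arg hslit).tendsto.comp
      ((hm3 ▸ hc.tendsto : Tendsto _ (nhds LL) (nhds LL)).comp T))
    rwa [hargLL] at this
  have h1 := lob_contAt.tendsto.comp harg1
  have h2 := lob_contAt.tendsto.comp harg2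
  have h3 := lob_contAt.tendsto.comp harg3
  have := (h1.add h2).add h3
  have e : lobachevsky (π/3) + lobachevsky (π/3) + lobachevsky (π/3)
      = 3 * lobachevsky (π/3) := by ring
  rw [e] at this
  exact this
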